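/- arXiv:1504.04961 — 4 statements merged into one kernel-verified Lean document; each statement's English description precedes it below -/
import Mathlib

section
/- Let I = (a,b) with -∞ ≤ a < b ≤ +∞, let B : I → ℝ be C² with B'' ≥ 0 on I, let c = 1/∫_a^b exp(-t²/2 - B(t)) dt, let E(y) = (1/√(2π)) ∫_{-∞}^y exp(-t²/2) dt, and define A(x) = E⁻¹(c ∫_a^x exp(-t²/2 - B(t)) dt). Then A'(x) ≥ 1 for all x ∈ I. -/
open Real MeasureTheory Set Filter

/-- Second derivative test at a local min. -/
lemma secondDerivTest {D D' : ℝ → ℝ} {x₀ d : ℝ}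
    (hmin : IsLocalMin D x₀) (hD : ∀ᶠ x in nhds x₀, HasDerivAt D (D' x) x)
    (hD'' : HasDerivAt D' d x₀) : 0 ≤ d := by
  by_contra hd
  push_neg at hd
  have hD0 : D' x₀ = 0 := hmin.hasDerivAt_eq_zero hD.self_of_nhds
  have hslope : Tendsto (slope D' x₀) (nhdsWithin x₀ {x₀}ᶜ) (nhds d) :=
    (hasDerivAt_iff_tendsto_slope).1 hD''
  have hneg : ∀ᶠ x in nhdsWithin x₀ (Ioi x₀), D' x < 0 := by
    have h1 : ∀ᶠ x in nhdsWithin x₀ (Ioi x₀), slope D' x₀ x < 0 :=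
      (hslope.mono_left (nhdsWithin_mono x₀ (fun y hy => ne_of_gt hy : Ioi x₀ ⊆ {x₀}ᶜ))).eventually_lt_const hd
    filter_upwards [h1, self_mem_nhdsWithin] with x hx hx'
    have hxpos : 0 < x - x₀ := sub_pos.2 hx'
    rw [slope_def_field, hD0, sub_zero] at hx
    by_contra hle
    push_neg at hle
    exact absurd hx (not_lt.2 (div_nonneg hle hxpos.le))
  obtain ⟨δ₁, hδ₁, h₁⟩ := Metric.mem_nhdsWithin_iff.1 hneg
  obtain ⟨δ₂, hδ₂, h₂⟩ := Metric.eventually_nhds_iff.1 hD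
  obtain ⟨δ₃, hδ₃, h₃⟩ := Metric.eventually_nhds_iff.1 hmin
  set δ := min δ₁ (min δ₂ δ₃) / 2 with hδdef
  have hδpos : 0 < δ := by positivity
  have hδlt : ∀ x ∈ Icc x₀ (x₀ + δ), dist x x₀ < min δ₁ (min δ₂ δ₃) := by
    intro x hx
    rw [Real.dist_eq, abs_of_nonneg (sub_nonneg.2 hx.1)]
    have := hx.2
    have h4 : 0 < min δ₁ (min δ₂ δ₃) := by positivity
    linarith
  have hanti : StrictAntiOn D (Icc x₀ (x₀ + δ)) := by
    apply strictAntiOn_of_deriv_neg (convex_Icc _ _)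
    · intro x hx
      exact ((h₂ ((hδlt x hx).trans_le (le_trans (min_le_right _ _) (min_le_left _ _)))).continuousAt).continuousWithinAt
    · intro x hx
      rw [interior_Icc] at hx
      have hd' : dist x x₀ < min δ₁ (min δ₂ δ₃) := hδlt x ⟨hx.1.le, hx.2.le⟩
      rw [(h₂ (hd'.trans_le (le_trans (min_le_right _ _) (min_le_left _ _)))).deriv]
      exact h₁ ⟨Metric.mem_ball.2 (hd'.trans_le (min_le_left _ _)), hx.1⟩
  have hlt : D (x₀ + δ) < D x₀ :=
    hanti (left_mem_Icc.2 (by linarith)) (right_mem_Icc.2 (by linarith)) (by linarith)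
  have hge : D x₀ ≤ D (x₀ + δ) := by
    apply h₃
    rw [Real.dist_eq, abs_of_nonneg (by linarith : (0:ℝ) ≤ x₀ + δ - x₀)]
    have h4 : 0 < min δ₁ (min δ₂ δ₃) := by positivity
    have : δ₃ ≥ min δ₁ (min δ₂ δ₃) := le_trans (min_le_right _ _) (min_le_right _ _)
    linarith
  linarith

lemma hasDerivAt_localInv {E g : ℝ → ℝ} {p e' : ℝ} (hmono : StrictMono E)
    (hg : ∀ᶠ q in nhds p, E (g q) = q) (hEd : HasDerivAt E e' (g p)) (he' : e' ≠ 0) :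
    HasDerivAt g e'⁻¹ p := by
  have hEp : E (g p) = p := hg.self_of_nhds
  have hcont : ContinuousAt g p := by
    rw [ContinuousAt, Metric.tendsto_nhds]
    intro ε hε
    have h1 : E (g p - ε) < p := by
      have : E (g p - ε) < E (g p) := hmono (by linarith)
      linarith [hEp]
    have h2 : p < E (g p + ε) := by
      have : E (g p) < E (g p + ε) := hmono (by linarith)
      linarith [hEp]
    have hball : ∀ᶠ q in nhds p, q ∈ Ioo (E (g p - ε)) (E (g p + ε)) :=
      Ioo_mem_nhds h1 h2
    filter_upwards [hg, hball] with q hq hq'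
    rw [Real.dist_eq, abs_lt]
    constructor
    · have : E (g p - ε) < E (g q) := by rw [hq]; exact hq'.1
      have := hmono.lt_iff_lt.1 this
      linarith
    · have : E (g q) < E (g p + ε) := by rw [hq]; exact hq'.2
      have := hmono.lt_iff_lt.1 this
      linarith
  exact HasDerivAt.of_local_left_inverse hcont hEd he' hg

lemma hasDerivAt_Iic_integral {f : ℝ → ℝ} (hf : Integrable f) (hcont : Continuous f) (y₀ : ℝ) :
    HasDerivAt (fun y => ∫ t in Iic y, f t) (f y₀) y₀ := by
  set v := y₀ - 1 with hv
  have hsplit : ∀ y, v ≤ y → ∫ t in Iic y, f t = (∫ t in Iic v, f t) + ∫ t in v..y, f t := by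
    intro y hy
    rw [intervalIntegral.integral_of_le hy, ← setIntegral_union]
    · rw [Iic_union_Ioc_eq_Iic hy]
    · exact Iic_disjoint_Ioc le_rfl
    · exact measurableSet_Ioc
    · exact hf.integrableOn
    · exact hf.integrableOn
  have hFTC : HasDerivAt (fun y => ∫ t in v..y, f t) (f y₀) y₀ := by
    apply intervalIntegral.integral_hasDerivAt_right hf.intervalIntegrable
      hcont.stronglyMeasurable.stronglyMeasurableAtFilter hcont.continuousAt
  have h2 : HasDerivAt (fun y => (∫ t in Iic v, f t) + ∫ t in v..y, f t) (f y₀) y₀ :=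
    (hFTC.const_add _)
  apply h2.congr_of_eventuallyEq
  filter_upwards [Ioi_mem_nhds (show v < y₀ by simp [hv])] with y hy
  exact hsplit y (le_of_lt hy)

lemma cdf_split {S : Set ℝ} (hconn : OrdConnected S) {f : ℝ → ℝ}
    (hint : IntegrableOn f S) {u x : ℝ} (hu : u ∈ S) (hx : x ∈ S) (hux : u ≤ x) :
    ∫ t in S ∩ Iio x, f t = (∫ t in S ∩ Iio u, f t) + ∫ t in u..x, f t := by
  have hIco : Ico u x ⊆ S := fun y hy => hconn.out hu hx ⟨hy.1, hy.2.le⟩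
  have hset : S ∩ Iio x = (S ∩ Iio u) ∪ Ico u x := by
    ext y
    constructor
    · rintro ⟨hyS, hyx⟩
      rcases lt_or_ge y u with h | h
      · exact Or.inl ⟨hyS, h⟩
      · exact Or.inr ⟨h, hyx⟩
    · rintro (⟨hyS, hyu⟩ | hy)
      · exact ⟨hyS, lt_of_lt_of_le hyu hux⟩
      · exact ⟨hIco hy, hy.2⟩
  rw [hset, setIntegral_union, integral_Ico_eq_integral_Ioo,
    intervalIntegral.integral_of_le hux, integral_Ioc_eq_integral_Ioo]
  · exact Disjoint.mono_left inter_subset_right (Iio_disjoint_Ici le_rfl |>.mono_right Ico_subset_Ici_self)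
  · exact measurableSet_Ico
  · exact hint.mono_set inter_subset_left
  · exact hint.mono_set hIco

lemma hasDerivAt_cdf {S : Set ℝ} (hS : IsOpen S) (hconn : OrdConnected S) {f : ℝ → ℝ}
    (hint : IntegrableOn f S) (hcont : ContinuousOn f S) {u x₀ : ℝ}
    (hu : u ∈ S) (hx₀ : x₀ ∈ S) (hux : u < x₀) :
    HasDerivAt (fun x => ∫ t in S ∩ Iio x, f t) (f x₀) x₀ := by
  have hIoc : Ioc u x₀ ⊆ S := fun y hy => hconn.out hu hx₀ ⟨hy.1.le, hy.2⟩
  have hFTC : HasDerivAt (fun x => ∫ t in u..x, f t) (f x₀) x₀ := by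
    apply intervalIntegral.integral_hasDerivAt_right
    · rw [intervalIntegrable_iff_integrableOn_Ioc_of_le hux.le]
      exact hint.mono_set hIoc
    · exact hcont.stronglyMeasurableAtFilter hS x₀ hx₀
    · exact hcont.continuousAt (hS.mem_nhds hx₀)
  have heq : ∀ᶠ x in nhds x₀, (∫ t in S ∩ Iio u, f t) + (∫ t in u..x, f t) = ∫ t in S ∩ Iio x, f t := by
    filter_upwards [hS.mem_nhds hx₀, Ioi_mem_nhds hux] with x hxS hxu
    exact (cdf_split hconn hint hu hxS hxu.le).symm
  exact (hFTC.const_add _).congr_of_eventuallyEq (heq.mono fun x hx => hx.symm)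

/-- One-dimensional transport lemma: the Brenier-type map `A` pushing the
log-concave perturbation of the Gaussian forward to the Gaussian satisfies
`A' ≥ 1` on `I = (a,b)`. -/
theorem stmt_0
    (a b : EReal) (hab : a < b)
    (I : Set ℝ) (hI : I = {x : ℝ | a < (x : EReal) ∧ (x : EReal) < b})
    (B : ℝ → ℝ) (hB : ContDiffOn ℝ 2 B I)
    (hBconv : ∀ x ∈ I, 0 ≤ deriv (deriv B) x)
    (hint : IntegrableOn (fun t => Real.exp (-t ^ 2 / 2 - B t)) I)
    (c : ℝ) (hc : c = (∫ t in I, Real.exp (-t ^ 2 / 2 - B t))⁻¹)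
    (E : ℝ → ℝ)
    (hE : ∀ y, E y = (Real.sqrt (2 * Real.pi))⁻¹ * ∫ t in Iic y, Real.exp (-t ^ 2 / 2))
    (A : ℝ → ℝ)
    (hA : ∀ x ∈ I, E (A x) = c * ∫ t in I ∩ Iio x, Real.exp (-t ^ 2 / 2 - B t)) :
    ∀ x ∈ I, 1 ≤ deriv A x := by
  -- basic setup
  set f : ℝ → ℝ := fun t => Real.exp (-t ^ 2 / 2 - B t) with hf
  set gg : ℝ → ℝ := fun t => Real.exp (-t ^ 2 / 2) with hgg
  set C : ℝ := (Real.sqrt (2 * Real.pi))⁻¹ with hC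
  have hπ : (0:ℝ) < 2 * Real.pi := by positivity
  have hCpos : 0 < C := by rw [hC]; positivity
  have hfpos : ∀ t, 0 < f t := fun t => Real.exp_pos _
  have hggpos : ∀ t, 0 < gg t := fun t => Real.exp_pos _
  have hIopen : IsOpen I := by
    have : I = ((↑) : ℝ → EReal) ⁻¹' (Ioo a b) := by
      rw [hI]; rfl
    rw [this]
    exact (isOpen_Ioo).preimage continuous_coe_real_ereal
  have hIconn : OrdConnected I := by
    rw [hI]
    constructor
    intro x hx y hy z hz
    constructor
    · exact lt_of_lt_of_le hx.1 (EReal.coe_le_coe_iff.2 hz.1)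
    · exact lt_of_le_of_lt (EReal.coe_le_coe_iff.2 hz.2) hy.2
  have hBcont : ContinuousOn B I := hB.continuousOn
  have hfcont : ContinuousOn f I := by
    apply Real.continuous_exp.comp_continuousOn
    exact (Continuous.continuousOn (((continuous_pow 2).neg.div_const 2))).sub hBcont
  have hmemI : ∀ {x u : ℝ}, x ∈ I → u ∈ I → True := fun _ _ => trivial
  -- Z positive
  have hnonempty : ∃ x : ℝ, x ∈ I := by
    obtain ⟨y, hy1, hy2⟩ := EReal.exists_between_coe_real hab
    exact ⟨y, by rw [hI]; exact ⟨hy1, hy2⟩⟩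
  have hvolI : 0 < volume I := by
    obtain ⟨x, hx⟩ := hnonempty
    exact hIopen.measure_pos volume ⟨x, hx⟩
  have hpos_int : ∀ (s : Set ℝ), MeasurableSet s → s ⊆ I → 0 < volume s →
      0 < ∫ t in s, f t := by
    intro s hsm hsub hsv
    rw [setIntegral_pos_iff_support_of_nonneg_ae]
    · have : Function.support f = univ := by
        ext t; simp [Function.support, (hfpos t).ne']
      rw [this, univ_inter]; exact hsv
    · exact Eventually.of_forall fun t => (hfpos t).le
    · exact hint.mono_set hsub
  have hZpos : 0 < ∫ t in I, f t := hpos_int I hIopen.measurableSet subset_rfl hvolI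
  have hcpos : 0 < c := by rw [hc]; exact inv_pos.2 hZpos
  set F : ℝ → ℝ := fun x => c * ∫ t in I ∩ Iio x, f t with hF
  -- derivative of F
  have hFd : ∀ x₀ ∈ I, HasDerivAt F (c * f x₀) x₀ := by
    intro x₀ hx₀
    have hax : a < (x₀ : EReal) := by rw [hI] at hx₀; exact hx₀.1
    obtain ⟨u, hu1, hu2⟩ := EReal.exists_between_coe_real hax
    have huI : u ∈ I := by
      rw [hI]; exact ⟨hu1, lt_trans hu2 (by rw [hI] at hx₀; exact hx₀.2)⟩
    have hux : u < x₀ := EReal.coe_lt_coe_iff.1 hu2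
    exact (hasDerivAt_cdf hIopen hIconn hint hfcont huI hx₀ hux).const_mul c
  -- strict monotonicity of F on I
  have hFmono : ∀ x ∈ I, ∀ y ∈ I, x < y → F x < F y := by
    intro x hx y hy hxy
    have hIoo : Ioo x y ⊆ I := fun z hz => hIconn.out hx hy ⟨hz.1.le, hz.2.le⟩
    have h1 : ∫ t in I ∩ Iio y, f t = (∫ t in I ∩ Iio x, f t) + ∫ t in x..y, f t :=
      cdf_split hIconn hint hx hy hxy.le
    have h2 : 0 < ∫ t in x..y, f t := by
      rw [intervalIntegral.integral_of_le hxy.le, integral_Ioc_eq_integral_Ioo]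
      apply hpos_int _ measurableSet_Ioo hIoo
      rw [Real.volume_Ioo]
      simp [hxy]
    rw [hF]
    simp only
    rw [h1]
    nlinarith
  have hFmono' : ∀ x ∈ I, ∀ y ∈ I, x ≤ y → F x ≤ F y := by
    intro x hx y hy hxy
    rcases eq_or_lt_of_le hxy with h | h
    · rw [h]
    · exact (hFmono x hx y hy h).le
  -- Gaussian facts
  have hgg_eq : gg = fun t => Real.exp (-(1/2 : ℝ) * t ^ 2) := by
    funext t; rw [hgg]; ring_nf
  have hgg_int : Integrable gg := by
    rw [hgg_eq]; exact integrable_exp_neg_mul_sq (by norm_num)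
  have hgg_cont : Continuous gg :=
    Real.continuous_exp.comp ((continuous_pow 2).neg.div_const 2)
  have hgg_total : ∫ t, gg t = Real.sqrt (2 * Real.pi) := by
    rw [hgg_eq]
    rw [integral_gaussian]
    rw [show (Real.pi / (1/2)) = 2 * Real.pi by ring]
  have hCtotal : C * ∫ t, gg t = 1 := by
    rw [hgg_total, hC]
    exact inv_mul_cancel₀ (by positivity)
  have hEd : ∀ y, HasDerivAt E (C * gg y) y := by
    intro y
    have hEfun : E = fun y => C * ∫ t in Iic y, gg t := funext hE
    rw [hEfun]
    exact (hasDerivAt_Iic_integral hgg_int hgg_cont y).const_mul C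
  have hEmono : StrictMono E := by
    apply strictMono_of_deriv_pos
    intro y
    rw [(hEd y).deriv]
    exact mul_pos hCpos (hggpos y)
  have hgg_pos_int : ∀ (s : Set ℝ), MeasurableSet s → 0 < volume s → 0 < ∫ t in s, gg t := by
    intro s hsm hsv
    rw [setIntegral_pos_iff_support_of_nonneg_ae]
    · have : Function.support gg = univ := by
        ext t; simp [Function.support, (hggpos t).ne']
      rw [this, univ_inter]; exact hsv
    · exact Eventually.of_forall fun t => (hggpos t).le
    · exact hgg_int.integrableOn
  have hElt1 : ∀ M, E M < 1 := by
    intro M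
    rw [hE M, ← hCtotal]
    have hsplit : ∫ t, gg t = (∫ t in Iic M, gg t) + ∫ t in Ioi M, gg t := by
      rw [← setIntegral_union (Iic_disjoint_Ioi le_rfl) measurableSet_Ioi
        hgg_int.integrableOn hgg_int.integrableOn, Iic_union_Ioi,
        Measure.restrict_univ]
    have h2 : 0 < ∫ t in Ioi M, gg t := hgg_pos_int _ measurableSet_Ioi (by simp)
    have : (∫ t in Iic M, gg t) < ∫ t, gg t := by rw [hsplit]; linarith
    exact (mul_lt_mul_iff_right₀ hCpos).2 this
  have hE0 : ∀ M, 0 < E M := by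
    intro M
    rw [hE M]
    apply mul_pos hCpos
    apply hgg_pos_int _ measurableSet_Iic
    simp
  -- derivative of A
  set Φinv : ℝ → ℝ := Function.invFun E with hΦinv
  have hrangeF : ∀ x ∈ I, E (Φinv (F x)) = F x := by
    intro x hx
    exact Function.invFun_eq ⟨A x, hA x hx⟩
  have hAeq : ∀ x ∈ I, A x = Φinv (F x) := by
    intro x hx
    exact hEmono.injective ((hA x hx).trans (hrangeF x hx).symm)
  have hbetween : ∀ x₀ ∈ I, ∃ u v : ℝ, u ∈ I ∧ v ∈ I ∧ u < x₀ ∧ x₀ < v := by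
    intro x₀ hx₀
    rw [hI] at hx₀
    obtain ⟨u, hu1, hu2⟩ := EReal.exists_between_coe_real hx₀.1
    obtain ⟨v, hv1, hv2⟩ := EReal.exists_between_coe_real hx₀.2
    exact ⟨u, v, by rw [hI]; exact ⟨hu1, lt_trans hu2 hx₀.2⟩,
      by rw [hI]; exact ⟨lt_trans hx₀.1 hv1, hv2⟩,
      EReal.coe_lt_coe_iff.1 hu2, EReal.coe_lt_coe_iff.1 hv1⟩
  have hAd : ∀ x₀ ∈ I, HasDerivAt A ((C * gg (A x₀))⁻¹ * (c * f x₀)) x₀ := by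
    intro x₀ hx₀
    obtain ⟨u, v, hu, hv, hux, hxv⟩ := hbetween x₀ hx₀
    have hIcc : Icc u v ⊆ I := fun z hz => hIconn.out hu hv hz
    have hFcont : ContinuousOn F (Icc u v) := fun x hx =>
      ((hFd x (hIcc hx)).continuousAt).continuousWithinAt
    have hnbhd : ∀ᶠ q in nhds (F x₀), E (Φinv q) = q := by
      have hmem : Ioo (F u) (F v) ∈ nhds (F x₀) :=
        Ioo_mem_nhds (hFmono u hu x₀ hx₀ hux) (hFmono x₀ hx₀ v hv hxv)
      filter_upwards [hmem] with q hq
      have hq' : q ∈ Icc (F u) (F v) := ⟨hq.1.le, hq.2.le⟩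
      obtain ⟨x, hxIcc, hFx⟩ := intermediate_value_Icc (le_of_lt (lt_trans hux hxv)) hFcont hq'
      rw [← hFx]
      exact hrangeF x (hIcc hxIcc)
    have hΦd : HasDerivAt Φinv (C * gg (Φinv (F x₀)))⁻¹ (F x₀) :=
      hasDerivAt_localInv hEmono hnbhd (hEd _) (ne_of_gt (mul_pos hCpos (hggpos _)))
    have hcomp : HasDerivAt (Φinv ∘ F) ((C * gg (Φinv (F x₀)))⁻¹ * (c * f x₀)) x₀ :=
      hΦd.comp x₀ (hFd x₀ hx₀)
    rw [← hAeq x₀ hx₀] at hcomp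
    apply hcomp.congr_of_eventuallyEq
    filter_upwards [hIopen.mem_nhds hx₀] with x hx
    exact hAeq x hx
  -- M with small Gaussian tail
  have hMexists : ∀ m : ℝ, 0 < m → ∃ M : ℝ, 0 ≤ M ∧ C * gg M < m := by
    intro m hm
    have h1 : Tendsto (fun M : ℝ => -M ^ 2 / 2) atTop atBot := by
      apply Tendsto.atBot_div_const (by norm_num : (0:ℝ) < 2)
      exact tendsto_neg_atTop_atBot.comp (tendsto_pow_atTop two_ne_zero)
    have h2 : Tendsto (fun M : ℝ => C * gg M) atTop (nhds (C * 0)) :=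
      (Real.tendsto_exp_atBot.comp h1).const_mul C
    rw [mul_zero] at h2
    obtain ⟨M, hM1, hM2⟩ := ((h2.eventually_lt_const hm).and (eventually_ge_atTop 0)).exists
    exact ⟨M, hM2, hM1⟩
  have hgg_anti : ∀ M y : ℝ, 0 ≤ M → M ≤ |y| → gg y ≤ gg M := by
    intro M y hM hMy
    rw [hgg]
    simp only
    rw [Real.exp_le_exp]
    have h1 : M ^ 2 ≤ y ^ 2 := by
      rw [← sq_abs y]
      exact pow_le_pow_left₀ hM hMy 2
    linarith
  -- sup of F is 1
  have hsupF : ∀ x₁ ∈ I, ∀ p : ℝ, p < 1 → ∃ b', b' ∈ I ∧ x₁ ≤ b' ∧ p < F b' := by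
    intro x₁ hx₁ p hp
    obtain ⟨y, hyI, hyx, hmono, hunion⟩ : ∃ y : ℕ → ℝ, (∀ n, y n ∈ I) ∧ (∀ n, x₁ ≤ y n) ∧
        Monotone (fun n => I ∩ Iio (y n)) ∧ ⋃ n, (I ∩ Iio (y n)) = I := by
      have hax₁ : a < (x₁ : EReal) := by rw [hI] at hx₁; exact hx₁.1
      have hx₁b : (x₁ : EReal) < b := by rw [hI] at hx₁; exact hx₁.2
      induction b with
      | bot => exact absurd hab (by simp)
      | top =>
        refine ⟨fun n => x₁ + n, fun n => ?_, fun n => le_add_of_nonneg_right (Nat.cast_nonneg n), ?_, ?_⟩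
        · rw [hI]
          refine ⟨lt_of_lt_of_le hax₁ (EReal.coe_le_coe_iff.2 (by simp)), EReal.coe_lt_top _⟩
        · intro n m hnm
          apply inter_subset_inter_right
          apply Iio_subset_Iio
          show x₁ + (n:ℝ) ≤ x₁ + (m:ℝ)
          have : (n : ℝ) ≤ m := Nat.cast_le.2 hnm
          linarith
        · apply subset_antisymm
          · exact iUnion_subset fun n => inter_subset_left
          · intro x hx
            obtain ⟨n, hn⟩ := exists_nat_gt (x - x₁)
            exact mem_iUnion.2 ⟨n, hx, by simp only [mem_Iio]; linarith⟩
      | coe r =>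
        have hx₁r : x₁ < r := EReal.coe_lt_coe_iff.1 hx₁b
        have hrx : 0 < r - x₁ := by linarith
        refine ⟨fun n => r - (r - x₁) / (n + 1), fun n => ?_, fun n => ?_, ?_, ?_⟩
        · rw [hI]
          constructor
          · refine lt_of_lt_of_le hax₁ (EReal.coe_le_coe_iff.2 ?_)
            have h3 : (r - x₁) / (n + 1) ≤ r - x₁ :=
              div_le_self hrx.le (by have : (0:ℝ) ≤ (n:ℝ) := Nat.cast_nonneg n; linarith)
            linarith
          · refine EReal.coe_lt_coe_iff.2 ?_
            have h3 : 0 < (r - x₁) / (n + 1) := by positivity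
            linarith
        · have h3 : (r - x₁) / (n + 1) ≤ r - x₁ := by
            apply div_le_self hrx.le
            have : (1:ℝ) ≤ n + 1 := by
              have : (0:ℝ) ≤ n := Nat.cast_nonneg n
              linarith
            linarith
          linarith
        · intro n m hnm
          apply inter_subset_inter_right
          apply Iio_subset_Iio
          show r - (r - x₁) / (n + 1) ≤ r - (r - x₁) / (m + 1)
          have h3 : (r - x₁) / (m + 1) ≤ (r - x₁) / (n + 1) := by
            apply div_le_div_of_nonneg_left hrx.le (by positivity)
            have : (n : ℝ) ≤ m := Nat.cast_le.2 hnm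
            linarith
          linarith
        · apply subset_antisymm
          · exact iUnion_subset fun n => inter_subset_left
          · intro x hx
            have hxr : x < r := by
              have := hx
              rw [hI] at this
              exact EReal.coe_lt_coe_iff.1 this.2
            obtain ⟨n, hn⟩ := exists_nat_gt ((r - x₁) / (r - x))
            refine mem_iUnion.2 ⟨n, hx, ?_⟩
            simp only [mem_Iio]
            have hrx2 : 0 < r - x := by linarith
            have h4 : (r - x₁) / (r - x) < n + 1 := by
              have : (0:ℝ) ≤ n := Nat.cast_nonneg n
              linarith
            have h5 : (r - x₁) < (r - x) * (n + 1) := by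
              rw [div_lt_iff₀ hrx2] at h4
              linarith [h4]
            have h6 : (r - x₁) / (n+1) < r - x := by
              rw [div_lt_iff₀ (by positivity : (0:ℝ) < (n:ℝ)+1)]
              linarith
            linarith
    have htend : Tendsto (fun n => ∫ t in I ∩ Iio (y n), f t) atTop (nhds (∫ t in I, f t)) := by
      have h7 := tendsto_setIntegral_of_monotone
        (fun n => (hIopen.measurableSet.inter measurableSet_Iio)) hmono
        (by rw [hunion]; exact hint)
      rwa [hunion] at h7
    have htendF : Tendsto (fun n => F (y n)) atTop (nhds 1) := by
      have h8 := htend.const_mul c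
      have h9 : c * ∫ t in I, f t = 1 := by
        rw [hc]
        exact inv_mul_cancel₀ hZpos.ne'
      rwa [h9] at h8
    obtain ⟨n, hn⟩ := (htendF.eventually_const_lt hp).exists
    exact ⟨y n, hyI n, hyx n, hn⟩
  -- inf of F is 0
  have hinfF : ∀ x₁ ∈ I, ∀ p : ℝ, 0 < p → ∃ a', a' ∈ I ∧ a' ≤ x₁ ∧ F a' < p := by
    intro x₁ hx₁ p hp
    obtain ⟨z, hzI, hzx, hanti, hinter⟩ : ∃ z : ℕ → ℝ, (∀ n, z n ∈ I) ∧ (∀ n, z n ≤ x₁) ∧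
        Antitone (fun n => I ∩ Iio (z n)) ∧ ⋂ n, (I ∩ Iio (z n)) = ∅ := by
      have hax₁ : a < (x₁ : EReal) := by rw [hI] at hx₁; exact hx₁.1
      have hx₁b : (x₁ : EReal) < b := by rw [hI] at hx₁; exact hx₁.2
      induction a with
      | top => exact absurd hab (by simp)
      | bot =>
        refine ⟨fun n => x₁ - n, fun n => ?_, fun n => by
          show x₁ - (n:ℝ) ≤ x₁
          have : (0:ℝ) ≤ (n:ℝ) := Nat.cast_nonneg n
          linarith, ?_, ?_⟩
        · rw [hI]
          refine ⟨EReal.bot_lt_coe _, lt_of_le_of_lt (EReal.coe_le_coe_iff.2 ?_) hx₁b⟩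
          show x₁ - (n:ℝ) ≤ x₁
          have : (0:ℝ) ≤ (n:ℝ) := Nat.cast_nonneg n
          linarith
        · intro n m hnm
          apply inter_subset_inter_right
          apply Iio_subset_Iio
          show x₁ - (m:ℝ) ≤ x₁ - (n:ℝ)
          have : (n : ℝ) ≤ m := Nat.cast_le.2 hnm
          linarith
        · apply eq_empty_of_forall_notMem
          intro x hx
          obtain ⟨n, hn⟩ := exists_nat_gt (x₁ - x)
          have := (mem_iInter.1 hx n).2
          simp only [mem_Iio] at this
          linarith
      | coe s =>
        have hsx₁ : s < x₁ := EReal.coe_lt_coe_iff.1 hax₁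
        have hxs : 0 < x₁ - s := by linarith
        refine ⟨fun n => s + (x₁ - s) / (n + 1), fun n => ?_, fun n => ?_, ?_, ?_⟩
        · rw [hI]
          constructor
          · refine EReal.coe_lt_coe_iff.2 ?_
            have : 0 < (x₁ - s) / (n + 1) := by positivity
            linarith
          · refine lt_of_le_of_lt (EReal.coe_le_coe_iff.2 ?_) hx₁b
            have : (x₁ - s) / (n + 1) ≤ x₁ - s :=
              div_le_self hxs.le (by have : (0:ℝ) ≤ (n:ℝ) := Nat.cast_nonneg n; linarith)
            linarith
        · have : (x₁ - s) / (n + 1) ≤ x₁ - s :=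
            div_le_self hxs.le (by have : (0:ℝ) ≤ (n:ℝ) := Nat.cast_nonneg n; linarith)
          linarith
        · intro n m hnm
          apply inter_subset_inter_right
          apply Iio_subset_Iio
          show s + (x₁ - s) / (m + 1) ≤ s + (x₁ - s) / (n + 1)
          have h3 : (x₁ - s) / (m + 1) ≤ (x₁ - s) / (n + 1) := by
            apply div_le_div_of_nonneg_left hxs.le (by positivity)
            have : (n : ℝ) ≤ m := Nat.cast_le.2 hnm
            linarith
          linarith
        · apply eq_empty_of_forall_notMem
          intro x hx
          have hxI : x ∈ I := (mem_iInter.1 hx 0).1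
          have hsx : s < x := by
            rw [hI] at hxI
            exact EReal.coe_lt_coe_iff.1 hxI.1
          obtain ⟨n, hn⟩ := exists_nat_gt ((x₁ - s) / (x - s))
          have h2 := (mem_iInter.1 hx n).2
          simp only [mem_Iio] at h2
          have hxs2 : 0 < x - s := by linarith
          have h4 : (x₁ - s) / (x - s) < (n:ℝ) + 1 := by
            have : (0:ℝ) ≤ (n:ℝ) := Nat.cast_nonneg n
            linarith
          have h5 : x₁ - s < (x - s) * ((n:ℝ) + 1) := by
            rw [div_lt_iff₀ hxs2] at h4
            linarith
          have h6 : (x₁ - s) / ((n:ℝ)+1) < x - s := by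
            rw [div_lt_iff₀ (by positivity : (0:ℝ) < (n:ℝ)+1)]
            linarith
          linarith
    have htend : Tendsto (fun n => ∫ t in I ∩ Iio (z n), f t) atTop (nhds 0) := by
      have h7 := tendsto_setIntegral_of_antitone
        (fun n => (hIopen.measurableSet.inter measurableSet_Iio)) hanti
        ⟨0, hint.mono_set inter_subset_left⟩
      rw [hinter] at h7
      simpa using h7
    have htendF : Tendsto (fun n => F (z n)) atTop (nhds 0) := by
      have h8 := htend.const_mul c
      rwa [mul_zero] at h8
    obtain ⟨n, hn⟩ := (htendF.eventually_lt_const hp).exists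
    exact ⟨z n, hzI n, hzx n, hn⟩
  -- derivatives of B and f
  have hBd : ∀ x ∈ I, HasDerivAt B (deriv B x) x := fun x hx =>
    ((hB.differentiableOn (by norm_num)).differentiableAt (hIopen.mem_nhds hx)).hasDerivAt
  have hB'd : ∀ x ∈ I, HasDerivAt (deriv B) (deriv (deriv B) x) x := by
    intro x hx
    have h1 : ContDiffOn ℝ 1 (deriv B) I := hB.deriv_of_isOpen hIopen (by norm_num)
    exact ((h1.differentiableOn one_ne_zero).differentiableAt (hIopen.mem_nhds hx)).hasDerivAt
  have hfd : ∀ x ∈ I, HasDerivAt f (f x * (-x - deriv B x)) x := by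
    intro x hx
    have h1 : HasDerivAt (fun t : ℝ => -t ^ 2 / 2 - B t) (-x - deriv B x) x := by
      have h2 := (((hasDerivAt_pow 2 x).neg).div_const 2).sub (hBd x hx)
      refine h2.congr_deriv ?_
      ring
    exact h1.exp
  -- the key nonnegativity
  set D : ℝ → ℝ := fun x => c * f x - C * gg (A x) with hD
  set G : ℝ → ℝ := fun x => c * f x * (A x - x - deriv B x) with hG
  have hDG : ∀ x ∈ I, HasDerivAt D (G x) x := by
    intro x hx
    have hp : 0 < C * gg (A x) := mul_pos hCpos (hggpos _)
    have part1 : HasDerivAt (fun x => c * f x) (c * (f x * (-x - deriv B x))) x :=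
      (hfd x hx).const_mul c
    have part2 : HasDerivAt (fun x => C * gg (A x))
        (C * (gg (A x) * (-A x * ((C * gg (A x))⁻¹ * (c * f x))))) x := by
      have h3 : HasDerivAt (fun x => -A x ^ 2 / 2)
          (-A x * ((C * gg (A x))⁻¹ * (c * f x))) x := by
        have h4 := (((hAd x hx).pow 2).neg).div_const 2
        refine h4.congr_deriv ?_
        ring
      exact (h3.exp).const_mul C
    have total := part1.sub part2
    refine total.congr_deriv ?_
    rw [hG]
    field_simp [(hggpos (A x)).ne']
    ring
  have hD0 : ∀ x ∈ I, 0 ≤ D x := by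
    by_contra hcon
    push_neg at hcon
    obtain ⟨x₁, hx₁, hDx₁⟩ := hcon
    set m : ℝ := D x₁ with hm
    obtain ⟨M, hM0, hMgg⟩ := hMexists (-m) (by linarith)
    obtain ⟨b', hb'I, hx₁b', hFb'⟩ := hsupF x₁ hx₁ (E M) (hElt1 M)
    obtain ⟨a', ha'I, ha'x₁, hFa'⟩ := hinfF x₁ hx₁ (E (-M)) (hE0 (-M))
    have hDright : ∀ y ∈ I, b' ≤ y → m < D y := by
      intro y hy hby
      have h1 : E M < F y := lt_of_lt_of_le hFb' (hFmono' b' hb'I y hy hby)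
      have h2 : E M < E (A y) := by rw [hA y hy]; exact h1
      have h3 : M < A y := hEmono.lt_iff_lt.1 h2
      have h4 : gg (A y) ≤ gg M := hgg_anti M (A y) hM0 (le_trans h3.le (le_abs_self _))
      have h5 : C * gg (A y) ≤ C * gg M := by
        exact mul_le_mul_of_nonneg_left h4 hCpos.le
      have h6 : 0 < c * f y := mul_pos hcpos (hfpos y)
      rw [hD]
      simp only
      linarith
    have hDleft : ∀ y ∈ I, y ≤ a' → m < D y := by
      intro y hy hya
      have h1 : F y < E (-M) := lt_of_le_of_lt (hFmono' y hy a' ha'I hya) hFa'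
      have h2 : E (A y) < E (-M) := by rw [hA y hy]; exact h1
      have h3 : A y < -M := hEmono.lt_iff_lt.1 h2
      have h4 : gg (A y) ≤ gg M := by
        apply hgg_anti M (A y) hM0
        rw [le_abs]
        right
        linarith
      have h5 : C * gg (A y) ≤ C * gg M := mul_le_mul_of_nonneg_left h4 hCpos.le
      have h6 : 0 < c * f y := mul_pos hcpos (hfpos y)
      rw [hD]
      simp only
      linarith
    have hKsub : Icc a' b' ⊆ I := fun z hz => hIconn.out ha'I hb'I hz
    have hDcont : ContinuousOn D (Icc a' b') := fun x hx =>
      ((hDG x (hKsub hx)).continuousAt).continuousWithinAt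
    have hx₁mem : x₁ ∈ Icc a' b' := ⟨ha'x₁, hx₁b'⟩
    obtain ⟨x₀, hx₀K, hminOn⟩ := (isCompact_Icc).exists_isMinOn ⟨x₁, hx₁mem⟩ hDcont
    have hDx₀ : D x₀ ≤ m := hminOn hx₁mem
    have hDa' : m < D a' := hDleft a' ha'I le_rfl
    have hDb' : m < D b' := hDright b' hb'I le_rfl
    have hx₀Ioo : x₀ ∈ Ioo a' b' := by
      constructor
      · rcases eq_or_lt_of_le hx₀K.1 with h | h
        · exfalso; rw [h] at hDa'; linarith
        · exact h
      · rcases eq_or_lt_of_le hx₀K.2 with h | h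
        · exfalso; rw [h] at hDx₀; linarith
        · exact h
    have hx₀I : x₀ ∈ I := hKsub hx₀K
    have hlocmin : IsLocalMin D x₀ := by
      filter_upwards [Ioo_mem_nhds hx₀Ioo.1 hx₀Ioo.2] with y hy
      exact hminOn ⟨hy.1.le, hy.2.le⟩
    -- first derivative vanishes
    have h0 : G x₀ = 0 := hlocmin.hasDerivAt_eq_zero (hDG x₀ hx₀I)
    have hcf : c * f x₀ ≠ 0 := (mul_pos hcpos (hfpos x₀)).ne'
    have hkey : A x₀ - x₀ - deriv B x₀ = 0 := by
      rcases mul_eq_zero.1 h0 with h | h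
      · exact absurd h hcf
      · exact h
    -- second derivative test
    set A' : ℝ := (C * gg (A x₀))⁻¹ * (c * f x₀) with hA'
    have hGd2 : HasDerivAt G
        (c * (f x₀ * (-x₀ - deriv B x₀)) * (A x₀ - x₀ - deriv B x₀)
          + c * f x₀ * (A' - 1 - deriv (deriv B) x₀)) x₀ := by
      have hu : HasDerivAt (fun x => c * f x) (c * (f x₀ * (-x₀ - deriv B x₀))) x₀ :=
        (hfd x₀ hx₀I).const_mul c
      have hv : HasDerivAt (fun x => A x - x - deriv B x)
          (A' - 1 - deriv (deriv B) x₀) x₀ :=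
        ((hAd x₀ hx₀I).sub (hasDerivAt_id x₀)).sub (hB'd x₀ hx₀I)
      exact hu.mul hv
    have hd2 : 0 ≤ c * (f x₀ * (-x₀ - deriv B x₀)) * (A x₀ - x₀ - deriv B x₀)
        + c * f x₀ * (A' - 1 - deriv (deriv B) x₀) := by
      apply secondDerivTest hlocmin _ hGd2
      filter_upwards [hIopen.mem_nhds hx₀I] with x hx
      exact hDG x hx
    rw [hkey, mul_zero, zero_add] at hd2
    have hcfpos : 0 < c * f x₀ := mul_pos hcpos (hfpos x₀)
    have hA'ge : 1 + deriv (deriv B) x₀ ≤ A' := by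
      by_contra hcon2
      push_neg at hcon2
      have hneg := mul_neg_of_pos_of_neg hcfpos
        (by linarith : A' - 1 - deriv (deriv B) x₀ < 0)
      linarith
    have hA'1 : 1 ≤ A' := le_trans (by linarith [hBconv x₀ hx₀I]) hA'ge
    have hp : 0 < C * gg (A x₀) := mul_pos hCpos (hggpos _)
    have hq : C * gg (A x₀) ≤ c * f x₀ := by
      have h8 : C * gg (A x₀) * A' = c * f x₀ := by
        rw [hA', ← mul_assoc, mul_inv_cancel₀ hp.ne', one_mul]
      calc C * gg (A x₀) = C * gg (A x₀) * 1 := (mul_one _).symm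
        _ ≤ C * gg (A x₀) * A' := mul_le_mul_of_nonneg_left hA'1 hp.le
        _ = c * f x₀ := h8
    have : 0 ≤ D x₀ := by rw [hD]; simp only; linarith
    linarith
  -- conclusion
  intro x hx
  rw [(hAd x hx).deriv]
  have hp : 0 < C * gg (A x) := mul_pos hCpos (hggpos _)
  have hq : C * gg (A x) ≤ c * f x := by
    have := hD0 x hx
    rw [hD] at this
    simp only at this
    linarith
  calc (1:ℝ) = (C * gg (A x))⁻¹ * (C * gg (A x)) := (inv_mul_cancel₀ hp.ne').symm
  _ ≤ (C * gg (A x))⁻¹ * (c * f x) := mul_le_mul_of_nonneg_left hq (inv_nonneg.2 hp.le)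
end

section
/- Let A be C³ on an open interval I with A' > 0, satisfying A''(x) = A'(x)(A(x)A'(x) - x - B'(x)) where B is C² with B'' ≥ 0. If A' has a local minimum at an interior point x₀ ∈ I, then A'(x₀) ≥ 1. -/
open Real Set Filter Topology

/-- At an interior local minimum of `A'`, the ODE `A'' = A'(A A' - x - B')`
together with `B'' ≥ 0` forces `A' ≥ 1`. -/
theorem stmt_4
    (I : Set ℝ) (hIopen : IsOpen I) (hIconn : Set.OrdConnected I)
    (A B : ℝ → ℝ)
    (hA : ContDiffOn ℝ 3 A I) (hA' : ∀ x ∈ I, 0 < deriv A x)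
    (hB : ContDiffOn ℝ 2 B I) (hBconv : ∀ x ∈ I, 0 ≤ deriv (deriv B) x)
    (hode : ∀ x ∈ I, deriv (deriv A) x = deriv A x * (A x * deriv A x - x - deriv B x))
    (x₀ : ℝ) (hx₀ : x₀ ∈ I) (hmin : IsLocalMin (deriv A) x₀) :
    1 ≤ deriv A x₀ := by
  by_contra hlt
  push_neg at hlt
  set A1 := deriv A with hA1def
  set φ : ℝ → ℝ := fun x => A x * A1 x - x - deriv B x with hφdef
  have hA1c : ContDiffOn ℝ 2 A1 I := hA.deriv_of_isOpen hIopen (by norm_num)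
  have hB1c : ContDiffOn ℝ 1 (deriv B) I := hB.deriv_of_isOpen hIopen (by norm_num)
  -- A'' x₀ = 0
  have hA2 : deriv A1 x₀ = 0 := hmin.deriv_eq_zero
  -- φ x₀ = 0
  have hφ0 : φ x₀ = 0 := by
    have := hode x₀ hx₀
    have hpos := hA' x₀ hx₀
    rw [hA2] at this
    have := this.symm
    rcases mul_eq_zero.1 this with h | h
    · exact absurd h (ne_of_gt hpos)
    · exact h
  -- derivatives at x₀
  have hAd : HasDerivAt A (A1 x₀) x₀ :=
    ((hA.contDiffAt (hIopen.mem_nhds hx₀)).differentiableAt (by norm_num)).hasDerivAt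
  have hA1d : HasDerivAt A1 (deriv A1 x₀) x₀ :=
    ((hA1c.contDiffAt (hIopen.mem_nhds hx₀)).differentiableAt (by norm_num)).hasDerivAt
  have hB1d : HasDerivAt (deriv B) (deriv (deriv B) x₀) x₀ :=
    ((hB1c.contDiffAt (hIopen.mem_nhds hx₀)).differentiableAt (by norm_num)).hasDerivAt
  set c : ℝ := A1 x₀ * A1 x₀ + A x₀ * deriv A1 x₀ - 1 - deriv (deriv B) x₀ with hcdef
  have hφd : HasDerivAt φ c x₀ := by
    have h1 := (hAd.mul hA1d).sub (hasDerivAt_id x₀)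
    have h2 := h1.sub hB1d
    exact h2
  have hcneg : c < 0 := by
    have hApos := hA' x₀ hx₀
    have hB2 := hBconv x₀ hx₀
    have : A1 x₀ * A1 x₀ < 1 := by nlinarith
    rw [hcdef, hA2]
    nlinarith
  -- φ > 0 just left of x₀
  have hslope : Tendsto (slope φ x₀) (𝓝[≠] x₀) (𝓝 c) :=
    hasDerivAt_iff_tendsto_slope.1 hφd
  have hslope' : Tendsto (slope φ x₀) (𝓝[<] x₀) (𝓝 c) :=
    hslope.mono_left (nhdsWithin_mono _ (fun x hx => ne_of_lt hx))
  have hφpos : ∀ᶠ x in 𝓝[<] x₀, 0 < φ x := by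
    filter_upwards [hslope'.eventually (gt_mem_nhds hcneg),
      self_mem_nhdsWithin] with x hs hx
    have hxlt : x - x₀ < 0 := sub_neg.2 hx
    have heq : slope φ x₀ x = (φ x - φ x₀) / (x - x₀) := slope_def_field φ x₀ x
    rw [heq, div_neg_iff] at hs
    rcases hs with ⟨h1, h2⟩ | ⟨h1, h2⟩
    · linarith
    · linarith
  have hI : ∀ᶠ x in 𝓝[<] x₀, x ∈ I :=
    eventually_nhdsWithin_of_eventually_nhds (hIopen.eventually_mem hx₀)
  have hminI : ∀ᶠ x in 𝓝[<] x₀, A1 x₀ ≤ A1 x := hmin.filter_mono nhdsWithin_le_nhds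
  have hall : ∀ᶠ x in 𝓝[<] x₀, x ∈ I ∧ 0 < φ x ∧ A1 x₀ ≤ A1 x := by
    filter_upwards [hφpos, hI, hminI] with x h1 h2 h3 using ⟨h2, h1, h3⟩
  rcases mem_nhdsLT_iff_exists_Ioo_subset.1 hall with ⟨a, ha, hsub⟩
  set m : ℝ := (a + x₀) / 2 with hmdef
  have ham : a < m := by simp [hmdef]; linarith [mem_Iio.1 ha]
  have hmx : m < x₀ := by simp [hmdef]; linarith [mem_Iio.1 ha]
  have hmE : m ∈ Ioo a x₀ := ⟨ham, hmx⟩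
  have hIccI : Icc m x₀ ⊆ I := by
    intro y hy
    rcases eq_or_lt_of_le hy.2 with h | h
    · rwa [h]
    · exact (hsub ⟨lt_of_lt_of_le ham hy.1, h⟩).1
  have hcont : ContinuousOn A1 (Icc m x₀) := (hA1c.continuousOn).mono hIccI
  have hmono : StrictMonoOn A1 (Icc m x₀) := by
    apply strictMonoOn_of_deriv_pos (convex_Icc m x₀) hcont
    intro y hy
    rw [interior_Icc] at hy
    have hyI : y ∈ I := hIccI ⟨le_of_lt hy.1, le_of_lt hy.2⟩
    have hyE := hsub ⟨lt_trans ham hy.1, hy.2⟩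
    have := hode y hyI
    rw [this]
    exact mul_pos (hA' y hyI) hyE.2.1
  have h1 : A1 m < A1 x₀ := hmono ⟨le_refl m, le_of_lt hmx⟩ ⟨le_of_lt hmx, le_refl x₀⟩ hmx
  have h2 : A1 x₀ ≤ A1 m := (hsub hmE).2.2
  linarith
end

section
/- Let B : ℝ → ℝ be convex and C¹ and suppose lim_{x→a⁺}(x²/2 + B(x)) = +∞ where a ∈ [-∞, ∞) is the left endpoint of the domain interval. Then lim_{x→a⁺}(x + B'(x)) = -∞. -/
open Real Set Filter

/-- If `B` is convex and `C¹` on `(a,b)` and `x²/2 + B(x) → +∞` as `x → a⁺`,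
then `x + B'(x) → -∞` as `x → a⁺` (limits via the `atBot` filter on the subtype `I`). -/
theorem stmt_6
    (a b : EReal) (hab : a < b)
    (I : Set ℝ) (hI : I = {x : ℝ | a < (x : EReal) ∧ (x : EReal) < b})
    (B : ℝ → ℝ) (hB : ContDiffOn ℝ 1 B I) (hBconv : ConvexOn ℝ I B)
    (hlim : Tendsto (fun x : I => (x : ℝ) ^ 2 / 2 + B x) atBot atTop) :
    Tendsto (fun x : I => (x : ℝ) + deriv B x) atBot atBot := by
  -- I is open
  have hIopen : IsOpen I := by
    rw [hI]
    have : {x : ℝ | a < (x : EReal) ∧ (x : EReal) < b}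
        = ((↑) : ℝ → EReal) ⁻¹' (Ioo a b) := rfl
    rw [this]
    exact isOpen_Ioo.preimage continuous_coe_real_ereal
  -- differentiability at points of I
  have hdiffOn : DifferentiableOn ℝ B I := hB.differentiableOn one_ne_zero
  have hdiff : ∀ x ∈ I, DifferentiableAt ℝ B x := fun x hx =>
    (hdiffOn x hx).differentiableAt (hIopen.mem_nhds hx)
  -- monotonicity of the derivative
  have hmono : MonotoneOn (deriv B) I := hBconv.monotoneOn_deriv hdiff
  -- I is nonempty
  obtain ⟨x0, hax0, hx0b⟩ := EReal.lt_iff_exists_real_btwn.mp hab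
  have hx0 : x0 ∈ I := by rw [hI]; exact ⟨hax0, hx0b⟩
  haveI : Nonempty I := ⟨⟨x0, hx0⟩⟩
  -- the function x + B'(x) is unbounded below on I
  have key : ∀ M : ℝ, ∃ x : I, (x : ℝ) + deriv B x ≤ M := by
    intro M
    by_contra hcon
    push_neg at hcon
    -- so M < x + deriv B x for all x ∈ I; then deriv B x > M - x
    set C : ℝ := (M + x0) ^ 2 / 2 + B x0 - M * x0 with hC
    have hbound : ∀ x : I, (x : I) ≤ (⟨x0, hx0⟩ : I) → (x : ℝ) ^ 2 / 2 + B x ≤ C := by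
      rintro ⟨x, hxI⟩ hle
      have hxle : x ≤ x0 := hle
      rcases eq_or_lt_of_le hxle with rfl | hlt
      · nlinarith [sq_nonneg (M + x - x)]
      · have hslope : deriv B x ≤ slope B x x0 :=
          hBconv.deriv_le_slope hxI hx0 hlt (hdiff x hxI)
        have hMx : M - x < deriv B x := by
          have := hcon ⟨x, hxI⟩
          linarith
        have hsl : slope B x x0 = (B x0 - B x) / (x0 - x) := by
          rw [slope_def_field]
        have hpos : (0:ℝ) < x0 - x := by linarith
        have h1 : (M - x) * (x0 - x) ≤ B x0 - B x := by
          have h2 : M - x ≤ (B x0 - B x) / (x0 - x) := by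
            rw [← hsl]; linarith
          calc (M - x) * (x0 - x) ≤ ((B x0 - B x) / (x0 - x)) * (x0 - x) := by
                exact mul_le_mul_of_nonneg_right h2 hpos.le
            _ = B x0 - B x := div_mul_cancel₀ _ hpos.ne'
        nlinarith [sq_nonneg (x - (M + x0))]
    -- contradiction with hlim
    have hev1 : ∀ᶠ x : I in atBot, C < (x : ℝ) ^ 2 / 2 + B x :=
      hlim.eventually_gt_atTop C
    have hev2 : ∀ᶠ x : I in atBot, x ≤ (⟨x0, hx0⟩ : I) :=
      eventually_le_atBot _
    obtain ⟨x, h1, h2⟩ := (hev1.and hev2).exists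
    exact absurd (hbound x h2) (not_le.mpr h1)
  -- conclude by monotonicity
  refine tendsto_atBot.2 fun M => ?_
  obtain ⟨x1, hx1⟩ := key M
  filter_upwards [eventually_le_atBot x1] with x hx
  have hxx1 : (x : ℝ) ≤ (x1 : ℝ) := hx
  have := hmono x.2 x1.2 hxx1
  linarith [hx1]
end

section
/- For A(x) = x + αx³ with α > 0, define B : ℝ → ℝ by exp(-A(x)²/2) A'(x) = √(2π) exp(-x²/2 - B(x)), i.e. B(x) = αx⁴ + α²x⁶/2 - log(1 + 3αx²) + log√(2π). Then B''(0) = -6α < 0; in particular B is not convex. -/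
open Real Set

/-- For `A(x) = x + αx³`, the associated `B` has `B''(0) = -6α < 0`,
so `B` is not convex. -/
theorem stmt_8
    (α : ℝ) (hα : 0 < α)
    (B : ℝ → ℝ)
    (hB : ∀ x, B x = α * x ^ 4 + α ^ 2 * x ^ 6 / 2 - Real.log (1 + 3 * α * x ^ 2)
      + Real.log (Real.sqrt (2 * Real.pi))) :
    deriv (deriv B) 0 = -6 * α ∧ -6 * α < 0 ∧ ¬ ConvexOn ℝ Set.univ B := by
  have hden : ∀ x : ℝ, (0:ℝ) < 1 + 3 * α * x ^ 2 := by
    intro x; nlinarith [sq_nonneg x, mul_nonneg hα.le (sq_nonneg x)]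
  have hBfun : B = fun x => α * x ^ 4 + α ^ 2 * x ^ 6 / 2 - Real.log (1 + 3 * α * x ^ 2)
      + Real.log (Real.sqrt (2 * Real.pi)) := funext hB
  have hd1 : ∀ x : ℝ, HasDerivAt B
      (4*α*x^3 + 3*α^2*x^5 - (6*α*x)/(1+3*α*x^2)) x := by
    intro x
    rw [hBfun]
    have h1 : HasDerivAt (fun x : ℝ => α * x ^ 4) (α * (↑4 * x ^ 3)) x :=
      (hasDerivAt_pow 4 x).const_mul α
    have h2 : HasDerivAt (fun x : ℝ => α ^ 2 * x ^ 6 / 2) (α ^ 2 * (↑6 * x ^ 5) / 2) x :=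
      ((hasDerivAt_pow 6 x).const_mul (α^2)).div_const 2
    have hg : HasDerivAt (fun x : ℝ => 1 + 3 * α * x ^ 2) (3 * α * (↑2 * x ^ 1)) x :=
      ((hasDerivAt_pow 2 x).const_mul (3*α)).const_add 1
    have h3 : HasDerivAt (fun x : ℝ => Real.log (1 + 3 * α * x ^ 2))
        ((3 * α * (↑2 * x ^ 1)) / (1 + 3 * α * x ^ 2)) x := hg.log (hden x).ne'
    have := ((h1.add h2).sub h3).add_const (Real.log (Real.sqrt (2 * Real.pi)))
    refine this.congr_deriv ?_
    push_cast
    ring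
  have hderivB : deriv B = fun x => 4*α*x^3 + 3*α^2*x^5 - (6*α*x)/(1+3*α*x^2) :=
    funext fun x => (hd1 x).deriv
  have hd2 : HasDerivAt (deriv B) (-6*α) 0 := by
    rw [hderivB]
    have h1 : HasDerivAt (fun x : ℝ => 4*α*x^3) (4*α*(↑3 * (0:ℝ)^2)) 0 :=
      (hasDerivAt_pow 3 0).const_mul (4*α)
    have h2 : HasDerivAt (fun x : ℝ => 3*α^2*x^5) (3*α^2*(↑5 * (0:ℝ)^4)) 0 :=
      (hasDerivAt_pow 5 0).const_mul (3*α^2)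
    have hnum : HasDerivAt (fun x : ℝ => 6*α*x) (6*α*1) 0 :=
      (hasDerivAt_id 0).const_mul (6*α)
    have hg : HasDerivAt (fun x : ℝ => 1 + 3 * α * x ^ 2) (3 * α * (↑2 * (0:ℝ) ^ 1)) 0 :=
      ((hasDerivAt_pow 2 0).const_mul (3*α)).const_add 1
    have h3 := hnum.div hg (hden 0).ne'
    have := (h1.add h2).sub h3
    refine this.congr_deriv ?_
    push_cast
    norm_num
  refine ⟨hd2.deriv, by nlinarith, ?_⟩
  intro hc
  -- pick t small with αt ≤ 1/3 and t ≤ 1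
  set t : ℝ := min 1 (1/(3*α)) with ht
  have ht0 : 0 < t := lt_min one_pos (by positivity)
  have ht1 : t ≤ 1 := min_le_left _ _
  have htα : 3*α*t ≤ 1 := by
    have := min_le_right 1 (1/(3*α))
    rw [le_div_iff₀ (by positivity)] at this
    linarith [this]
  set x : ℝ := Real.sqrt t with hx
  have hx2 : x ^ 2 = t := Real.sq_sqrt ht0.le
  -- B is even, convexity gives B 0 ≤ B x
  have hconv := hc.2 (mem_univ x) (mem_univ (-x)) (by norm_num : (0:ℝ) ≤ 1/2)
    (by norm_num : (0:ℝ) ≤ 1/2) (by norm_num)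
  have hmid : (1/2 : ℝ) • x + (1/2 : ℝ) • (-x) = 0 := by
    rw [smul_eq_mul, smul_eq_mul]; ring
  rw [hmid] at hconv
  have heven : B (-x) = B x := by rw [hB, hB]; ring_nf
  rw [heven] at hconv
  have hconv' : B 0 ≤ B x := by
    simp only [smul_eq_mul] at hconv; linarith [hconv]
  -- but B x < B 0
  have hlog : 3*α*t / (1 + 3*α*t) ≤ Real.log (1 + 3*α*t) := by
    have h := Real.log_le_sub_one_of_pos (show (0:ℝ) < (1 + 3*α*t)⁻¹ by positivity)
    rw [Real.log_inv] at h
    have hd : (0:ℝ) < 1 + 3*α*t := by positivity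
    have : (1 + 3*α*t)⁻¹ - 1 = -(3*α*t / (1 + 3*α*t)) := by
      field_simp
      ring
    linarith [h, this ▸ h]
  have hBx : B x < B 0 := by
    rw [hB, hB]
    have h0 : Real.log (1 + 3 * α * (0:ℝ) ^ 2) = 0 := by norm_num
    rw [h0]
    have hx4 : x ^ 4 = t ^ 2 := by rw [show (4:ℕ) = 2*2 from rfl, pow_mul, hx2]
    have hx6 : x ^ 6 = t ^ 3 := by rw [show (6:ℕ) = 2*3 from rfl, pow_mul, hx2]
    rw [hx4, hx6, hx2]
    have key : α * t ^ 2 + α ^ 2 * t ^ 3 / 2 < 3*α*t / (1 + 3*α*t) := by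
      rw [lt_div_iff₀ (by positivity)]
      nlinarith [mul_pos hα ht0, htα, ht1, ht0.le, hα.le,
        mul_nonneg (mul_nonneg hα.le ht0.le) ht0.le,
        mul_nonneg (mul_nonneg (mul_nonneg hα.le hα.le) ht0.le) ht0.le,
        mul_le_one₀ htα (by positivity) ht1]
    nlinarith [hlog, key]
  linarith [hconv', hBx]
end
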